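/- arXiv:1805.10708 — 4 statements merged into one kernel-verified Lean document; each statement's English description precedes it below -/
import Mathlib

section
/- Assume r ≥ 1. For every connected component C of the induced subgraph of G on V \ ({s, t} ∪ V(P_1) ∪ … ∪ V(P_r)) (a bridge), the vertices of C are single (uncontracted) vertices of the residual digraph G_res and are pairwise mutually reachable in G_res; that is, C is contained in a single strongly connected component of G_res. -/
namespace PaperTW

variable {V : Type*} [DecidableEq V]

/-- `v` is an internal vertex of the `s`–`t` walk `W`. -/
def Internal {G : SimpleGraph V} {s t : V} (W : G.Walk s t) (v : V) : Prop :=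
  v ∈ W.support ∧ v ≠ s ∧ v ≠ t

/-- The walk `W` (oriented from `s` to `t`) traverses an edge from `u` to `v`. -/
def Traversed {G : SimpleGraph V} {s t : V} (W : G.Walk s t) (u v : V) : Prop :=
  ∃ d ∈ W.darts, d.toProd = (u, v)

/-- A system of `s`–`t` paths that are pairwise vertex-disjoint except at the
shared endpoints `s` and `t`. -/
def PathSystem {G : SimpleGraph V} {s t : V} {r : ℕ} (P : Fin r → G.Walk s t) : Prop :=
  (∀ j, (P j).IsPath) ∧
    ∀ j j', j ≠ j' → ∀ v, v ∈ (P j).support → v ∈ (P j').support → v = s ∨ v = t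

/-- The vertex `v_in` of the split residual digraph. -/
def vin (v : V) : V ⊕ V := Sum.inl v

/-- The vertex `v_out` of the split residual digraph (with the conventions
`s_in = s_out = s` and `t_in = t_out = t`). -/
def vout (s t v : V) : V ⊕ V := if v = s ∨ v = t then Sum.inl v else Sum.inr v

variable (G : SimpleGraph V) (s t : V) {r : ℕ} (P : Fin r → G.Walk s t)

/-- Arcs of the split residual digraph `G'_res`. -/
inductive SplitArc : V ⊕ V → V ⊕ V → Prop
  | split (v : V) (h1 : v ≠ s) (h2 : v ≠ t) (h3 : ∀ j, ¬ Internal (P j) v) :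
      SplitArc (vin v) (vout s t v)
  | back (v : V) (j : Fin r) (h : Internal (P j) v) :
      SplitArc (vout s t v) (vin v)
  | offpath (u v : V) (h : G.Adj u v) (h2 : ∀ j, s(u, v) ∉ (P j).edges) :
      SplitArc (vout s t u) (vin v)
  | pathRev (u v : V) (j : Fin r) (h : Traversed (P j) u v) :
      SplitArc (vout s t v) (vin u)
  | pathRev' (u v : V) (j : Fin r) (h : Traversed (P j) u v) :
      SplitArc (vin v) (vout s t u)

open Classical in
/-- The identification map defining `G_res`: for every `v` internal to none of the
paths, `v_in` and `v_out` are identified into the single vertex `v`. -/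
noncomputable def collapse : V ⊕ V → V ⊕ V
  | Sum.inl v => Sum.inl v
  | Sum.inr v => if ∃ j, Internal (P j) v then Sum.inr v else Sum.inl v

/-- Arcs of the residual digraph `G_res`. -/
def ResArc (x y : V ⊕ V) : Prop :=
  ∃ a b, SplitArc G s t P a b ∧ x = collapse G s t P a ∧ y = collapse G s t P b

/-- The arcs `(v_out, u_in)` of `G_res` coming from edges of some path traversed
from `u` to `v` (these get deleted to form the reachability digraph). -/
def DeletedArc (x y : V ⊕ V) : Prop :=
  ∃ u v, (∃ j, Traversed (P j) u v) ∧
    x = collapse G s t P (vout s t v) ∧ y = collapse G s t P (vin u)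

/-- Arcs of `G_res` with the arcs `(v_out, u_in)` (for path edges traversed from
`u` to `v`) deleted. -/
def ReachArc (x y : V ⊕ V) : Prop :=
  ResArc G s t P x y ∧ ¬ DeletedArc G s t P x y

/-- Vertices lying on none of the paths (and different from `s`, `t`). -/
def offPath : Set V := {v | v ≠ s ∧ v ≠ t ∧ ∀ j, v ∉ (P j).support}

/-- Bridges: connected components of the subgraph of `G` induced on the vertices
off all the paths. -/
abbrev Bridge := (G.induce (offPath G s t P)).ConnectedComponent

/-- Vertices of the reachability digraph `G_R`: path vertices of `G_res`, plus one
contracted vertex `β_i` for each bridge `B_i`. -/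
abbrev GRV := (V ⊕ V) ⊕ Bridge G s t P

open Classical in
/-- The contraction map from vertices of `G_res` to vertices of `G_R`. -/
noncomputable def toGR : V ⊕ V → GRV G s t P
  | Sum.inl v =>
      if h : v ∈ offPath G s t P then
        Sum.inr ((G.induce (offPath G s t P)).connectedComponentMk ⟨v, h⟩)
      else Sum.inl (Sum.inl v)
  | Sum.inr v =>
      if h : v ∈ offPath G s t P then
        Sum.inr ((G.induce (offPath G s t P)).connectedComponentMk ⟨v, h⟩)
      else Sum.inl (Sum.inr v)

/-- Arcs of the reachability digraph `G_R` (arcs inside a bridge disappear). -/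
def GRArc (X Y : GRV G s t P) : Prop :=
  (∃ a b, ReachArc G s t P a b ∧ X = toGR G s t P a ∧ Y = toGR G s t P b) ∧ X ≠ Y

/-- The vertices of the directed path `P_j` inside `G_res`/`G_R`. -/
def OnPath (j : Fin r) (x : V ⊕ V) : Prop :=
  x = Sum.inl s ∨ x = Sum.inl t ∨ ∃ v, Internal (P j) v ∧ (x = Sum.inl v ∨ x = Sum.inr v)

/-- Numbering of the vertices of the directed path `P_j` of `G_R` (going from `t`
to `s`) starting from its final vertex `s`: `s` gets number 1, and the `i`-th
internal vertex `v` (counted from the `s`-side, whence `v` has index `i` in the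
support of `P_j`) contributes `v_in ↦ 2i` and `v_out ↦ 2i + 1`; finally `t` gets
the largest number. -/
def posOn (j : Fin r) : V ⊕ V → ℕ
  | Sum.inl v =>
      if v = s then 1
      else if v = t then 2 * (P j).support.length - 2
      else 2 * (P j).support.idxOf v
  | Sum.inr v => 2 * (P j).support.idxOf v + 1

/-- Positions on `P_j` of the in-neighbors of the bridge `β` in `G_R`. -/
def InPos (β : Bridge G s t P) (j : Fin r) : Set ℕ :=
  {n | ∃ x, OnPath G s t P j x ∧ GRArc G s t P (Sum.inl x) (Sum.inr β) ∧ posOn G s t P j x = n}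

/-- Positions on `P_j` of the out-neighbors of the bridge `β` in `G_R`. -/
def OutPos (β : Bridge G s t P) (j : Fin r) : Set ℕ :=
  {n | ∃ x, OnPath G s t P j x ∧ GRArc G s t P (Sum.inr β) (Sum.inl x) ∧ posOn G s t P j x = n}

/-- `l_β^j` is defined. -/
def HasL (β : Bridge G s t P) (j : Fin r) : Prop := (InPos G s t P β j).Nonempty

/-- `r_β^j` is defined. -/
def HasR (β : Bridge G s t P) (j : Fin r) : Prop := (OutPos G s t P β j).Nonempty

/-- The position of `l_β^j`, the leftmost in-neighbor of `β` on `P_j`. -/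
noncomputable def lpos (β : Bridge G s t P) (j : Fin r) : ℕ := sInf (InPos G s t P β j)

/-- The position of `r_β^j`, the rightmost out-neighbor of `β` on `P_j`. -/
noncomputable def rpos (β : Bridge G s t P) (j : Fin r) : ℕ := sSup (OutPos G s t P β j)

/-- Condition (a) of the definition of `D_j`. -/
def CondA (βi βx : Bridge G s t P) : Prop :=
  ∃ y : Fin r, HasL G s t P βx y ∧ HasR G s t P βi y ∧ lpos G s t P βx y ≤ rpos G s t P βi y

/-- Condition (b) of the definition of `D_j`. -/
def CondB (j : Fin r) (βi βx : Bridge G s t P) : Prop :=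
  HasR G s t P βx j ∧ (¬ HasR G s t P βi j ∨ rpos G s t P βi j < rpos G s t P βx j)

variable (ID : Bridge G s t P → ℕ)

/-- The arc set `D_j` of the bridge graph. -/
def DArc (j : Fin r) (βi βx : Bridge G s t P) : Prop :=
  βi ≠ βx ∧ CondA G s t P βi βx ∧ CondB G s t P j βi βx ∧
    ∀ βz : Bridge G s t P, βz ≠ βi → CondA G s t P βi βz → CondB G s t P j βi βz →
      (rpos G s t P βz j < rpos G s t P βx j ∨
        (rpos G s t P βz j = rpos G s t P βx j ∧ ID βz ≤ ID βx))

/-- Lying in the same connected component of the undirected graph underlying `D_j`. -/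
def SameCompD (j : Fin r) : Bridge G s t P → Bridge G s t P → Prop :=
  Relation.ReflTransGen (fun a b => DArc G s t P ID j a b ∨ DArc G s t P ID j b a)

/-- `v` is a vertex of the bridge `β`. -/
def InBridge (β : Bridge G s t P) (v : V) : Prop :=
  ∃ h : v ∈ offPath G s t P, (G.induce (offPath G s t P)).connectedComponentMk ⟨v, h⟩ = β

/-- The bridge `β` is `s`-reachable: some vertex of it is adjacent to `s` in `G`. -/
def SReachable (β : Bridge G s t P) : Prop := ∃ v, InBridge G s t P β v ∧ G.Adj s v

/-- The bridge `β` is `t`-reachable: some vertex of it is adjacent to `t` in `G`. -/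
def TReachable (β : Bridge G s t P) : Prop := ∃ v, InBridge G s t P β v ∧ G.Adj v t

/-- The bridge `β` is mutually reachable with `s` in the reachability digraph `G_R`. -/
def BridgeWithS (β : Bridge G s t P) : Prop :=
  Relation.ReflTransGen (GRArc G s t P) (Sum.inl (Sum.inl s)) (Sum.inr β) ∧
  Relation.ReflTransGen (GRArc G s t P) (Sum.inr β) (Sum.inl (Sum.inl s))


/-- Assume `r ≥ 1`. For every connected component (bridge) of the subgraph of `G`
induced on `V \ ({s, t} ∪ V(P_1) ∪ … ∪ V(P_r))`, its vertices are single
(uncontracted) vertices of the residual digraph `G_res`, and any two vertices of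
the same component are mutually reachable in `G_res`: each bridge lies in a
single strongly connected component of `G_res`. -/
theorem bridge_stronglyConnected_in_residual
    {V : Type*} [Fintype V] [DecidableEq V]
    (G : SimpleGraph V) (s t : V) (hst : s ≠ t)
    {r : ℕ} (hr : 1 ≤ r) (P : Fin r → G.Walk s t) (hP : PathSystem P) :
    (∀ v : offPath G s t P, collapse G s t P (Sum.inr (v : V)) = Sum.inl (v : V)) ∧
    ∀ u v : offPath G s t P,
      (G.induce (offPath G s t P)).Reachable u v →
        Relation.ReflTransGen (ResArc G s t P) (Sum.inl (u : V)) (Sum.inl (v : V)) ∧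
        Relation.ReflTransGen (ResArc G s t P) (Sum.inl (v : V)) (Sum.inl (u : V)) := by
  have hcol : ∀ v : offPath G s t P,
      collapse G s t P (Sum.inr (v : V)) = Sum.inl (v : V) := by
    rintro ⟨v, hv1, hv2, hv3⟩
    have hni : ¬∃ j, Internal (P j) v := by
      rintro ⟨j, hj, -⟩
      exact hv3 j hj
    simp [collapse, hni]
  refine ⟨hcol, ?_⟩
  have step : ∀ u v : offPath G s t P, G.Adj (u : V) (v : V) →
      ResArc G s t P (Sum.inl (u : V)) (Sum.inl (v : V)) := by
    rintro ⟨u, hu1, hu2, hu3⟩ ⟨v, hv1, hv2, hv3⟩ hadj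
    refine ⟨vout s t u, vin v, SplitArc.offpath u v hadj ?_, ?_, ?_⟩
    · intro j hj
      exact hu3 j ((P j).fst_mem_support_of_mem_edges hj)
    · have : vout s t u = Sum.inr u := by
        simp [vout, hu1, hu2]
      rw [this]
      exact (hcol ⟨u, hu1, hu2, hu3⟩).symm
    · rfl
  have key : ∀ u v : offPath G s t P, (G.induce (offPath G s t P)).Reachable u v →
      Relation.ReflTransGen (ResArc G s t P) (Sum.inl (u : V)) (Sum.inl (v : V)) := by
    intro u v h
    rw [SimpleGraph.reachable_iff_reflTransGen] at h
    induction h with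
    | refl => exact Relation.ReflTransGen.refl
    | tail _ hbc ih =>
        exact ih.tail (step _ _ hbc)
  intro u v h
  exact ⟨key u v h, key v u h.symm⟩

end PaperTW
end

section
/- For every bridge β_i and every j ∈ {1, …, r}: if l_i^j is defined, then r_i^j is defined and the position of r_i^j on P_j is at least the position of l_i^j minus 1 (briefly, r_i^j ≥ l_i^j − 1). -/
namespace PaperTW

variable {V : Type*} [DecidableEq V]

variable (G : SimpleGraph V) (s t : V) {r : ℕ} (P : Fin r → G.Walk s t)

variable (ID : Bridge G s t P → ℕ)

section Helpers

set_option linter.unusedSectionVars false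

variable {V : Type*} [DecidableEq V] {G : SimpleGraph V} {s t : V} {r : ℕ}
  {P : Fin r → G.Walk s t}

lemma traversed_mem_support_left {j : Fin r} {u v : V} (h : Traversed (P j) u v) :
    u ∈ (P j).support := by
  obtain ⟨d, hd, hp⟩ := h
  have h1 := SimpleGraph.Walk.dart_fst_mem_support_of_mem_darts _ hd
  rwa [show d.toProd.1 = u by rw [hp]] at h1

lemma traversed_mem_support_right {j : Fin r} {u v : V} (h : Traversed (P j) u v) :
    v ∈ (P j).support := by
  obtain ⟨d, hd, hp⟩ := h
  have h1 := SimpleGraph.Walk.dart_snd_mem_support_of_mem_darts _ hd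
  rwa [show d.toProd.2 = v by rw [hp]] at h1

lemma collapse_inl (v : V) : collapse G s t P (Sum.inl v) = Sum.inl v := rfl

open Classical in
lemma collapse_inr (v : V) :
    collapse G s t P (Sum.inr v) =
      if ∃ j, Internal (P j) v then Sum.inr v else Sum.inl v := rfl

open Classical in
lemma toGR_inl_eq (v : V) :
    toGR G s t P (Sum.inl v) =
      if h : v ∈ offPath G s t P then
        Sum.inr ((G.induce (offPath G s t P)).connectedComponentMk ⟨v, h⟩)
      else Sum.inl (Sum.inl v) := rfl

open Classical in
lemma toGR_inr_eq (v : V) :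
    toGR G s t P (Sum.inr v) =
      if h : v ∈ offPath G s t P then
        Sum.inr ((G.induce (offPath G s t P)).connectedComponentMk ⟨v, h⟩)
      else Sum.inl (Sum.inr v) := rfl

lemma posOn_inl (j : Fin r) (v : V) :
    posOn G s t P j (Sum.inl v) =
      if v = s then 1
      else if v = t then 2 * (P j).support.length - 2
      else 2 * (P j).support.idxOf v := rfl

lemma posOn_inr (j : Fin r) (v : V) :
    posOn G s t P j (Sum.inr v) = 2 * (P j).support.idxOf v + 1 := rfl

lemma collapse_vout_eq_inl {u z : V} (h : collapse G s t P (vout s t u) = Sum.inl z) :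
    u = z ∧ (u = s ∨ u = t ∨ ¬ ∃ j, Internal (P j) u) := by
  unfold vout at h
  split_ifs at h with h1
  · rw [collapse_inl] at h
    exact ⟨Sum.inl.inj h, h1.imp id Or.inl⟩
  · rw [collapse_inr] at h
    split_ifs at h with h2
    exact ⟨Sum.inl.inj h, Or.inr (Or.inr h2)⟩

lemma collapse_vout_eq_inr {u z : V} (h : collapse G s t P (vout s t u) = Sum.inr z) :
    u = z ∧ ∃ j, Internal (P j) u := by
  unfold vout at h
  split_ifs at h with h1
  · rw [collapse_inl] at h; exact absurd h (by simp)
  · rw [collapse_inr] at h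
    split_ifs at h with h2
    exact ⟨Sum.inr.inj h, h2⟩

lemma collapse_eq_inr {c : V ⊕ V} {v : V} (h : collapse G s t P c = Sum.inr v) :
    ∃ j, Internal (P j) v := by
  cases c with
  | inl w => rw [collapse_inl] at h; exact absurd h (by simp)
  | inr w =>
      rw [collapse_inr] at h
      split_ifs at h with h2
      rwa [show w = v from Sum.inr.inj h] at h2

lemma toGR_inl_offPath {w : V} (hw : w ∈ offPath G s t P) :
    toGR G s t P (Sum.inl w) =
      Sum.inr ((G.induce (offPath G s t P)).connectedComponentMk ⟨w, hw⟩) := by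
  rw [toGR_inl_eq]; exact dif_pos hw

lemma toGR_inl_not_offPath {w : V} (hw : w ∉ offPath G s t P) :
    toGR G s t P (Sum.inl w) = Sum.inl (Sum.inl w) := by
  rw [toGR_inl_eq]; exact dif_neg hw

lemma toGR_eq_inl {c x : V ⊕ V} (h : toGR G s t P c = Sum.inl x) : c = x := by
  cases c with
  | inl v =>
      rw [toGR_inl_eq] at h
      split_ifs at h with h1
      exact Sum.inl.inj h
  | inr v =>
      rw [toGR_inr_eq] at h
      split_ifs at h with h1
      exact Sum.inl.inj h

lemma arc_into_bridge {x : V ⊕ V} {β : Bridge G s t P}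
    (h : GRArc G s t P (Sum.inl x) (Sum.inr β)) :
    ∃ u w, ∃ _ : w ∈ offPath G s t P,
      toGR G s t P (Sum.inl w) = Sum.inr β ∧
      G.Adj u w ∧ (∀ j, s(u, w) ∉ (P j).edges) ∧
      x = collapse G s t P (vout s t u) := by
  obtain ⟨⟨a, b, ⟨⟨a', b', hSplit, ha, hb⟩, _⟩, hXa, hYb⟩, _⟩ := h
  obtain ⟨w, hw, rfl, hwβ⟩ :
      ∃ w, ∃ _ : w ∈ offPath G s t P,
        b = Sum.inl w ∧ toGR G s t P (Sum.inl w) = Sum.inr β := by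
    cases b with
    | inl v =>
        by_cases hv : v ∈ offPath G s t P
        · exact ⟨v, hv, rfl, hYb.symm⟩
        · rw [toGR_inl_not_offPath hv] at hYb
          exact absurd hYb (by simp)
    | inr v =>
        exfalso
        obtain ⟨j, hj⟩ := collapse_eq_inr hb.symm
        by_cases hv : v ∈ offPath G s t P
        · exact hv.2.2 j hj.1
        · rw [toGR_inr_eq, dif_neg hv] at hYb
          exact absurd hYb (by simp)
  have hax : x = collapse G s t P a' := by
    rw [← ha]; exact (toGR_eq_inl hXa.symm).symm
  cases hSplit with
  | split v h1 h2 h3 =>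
      obtain ⟨hvw, -⟩ := collapse_vout_eq_inl hb.symm
      subst hvw
      rw [ha, show vin v = Sum.inl v from rfl, collapse_inl, hwβ] at hXa
      exact absurd hXa (by simp)
  | back v j' hint =>
      rw [show vin v = Sum.inl v from rfl, collapse_inl] at hb
      obtain hvw := Sum.inl.inj hb
      subst hvw
      exact absurd hint.1 (hw.2.2 j')
  | offpath u v hadj h2 =>
      rw [show vin v = Sum.inl v from rfl, collapse_inl] at hb
      obtain hvw := Sum.inl.inj hb
      subst hvw
      exact ⟨u, _, hw, hwβ, hadj, h2, hax⟩
  | pathRev u v j' htr =>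
      rw [show vin u = Sum.inl u from rfl, collapse_inl] at hb
      obtain hvw := Sum.inl.inj hb
      subst hvw
      exact absurd (traversed_mem_support_left htr) (hw.2.2 j')
  | pathRev' u v j' htr =>
      obtain ⟨hvw, -⟩ := collapse_vout_eq_inl hb.symm
      subst hvw
      exact absurd (traversed_mem_support_left htr) (hw.2.2 j')

lemma posOn_le (j : Fin r) (y : V ⊕ V) :
    posOn G s t P j y ≤ 2 * (P j).support.length + 1 := by
  cases y with
  | inl v =>
      have h1 := List.idxOf_le_length (a := v) (l := (P j).support)
      rw [posOn_inl]
      split_ifs <;> omega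
  | inr v =>
      have h1 := List.idxOf_le_length (a := v) (l := (P j).support)
      rw [posOn_inr]
      omega

end Helpers

/-- For every bridge `β` and every `j ∈ {1, …, r}`: if `l_β^j` is defined, then
`r_β^j` is defined and its position on `P_j` is at least the position of `l_β^j`
minus 1 (briefly, `r_β^j ≥ l_β^j − 1`). -/
theorem rpos_defined_and_ge_lpos_sub_one
    {V : Type*} [Fintype V] [DecidableEq V]
    (G : SimpleGraph V) (s t : V) (hst : s ≠ t)
    {r : ℕ} (hr : 1 ≤ r) (P : Fin r → G.Walk s t) (hP : PathSystem P) :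
    ∀ (β : Bridge G s t P) (j : Fin r),
      HasL G s t P β j →
        HasR G s t P β j ∧ lpos G s t P β j ≤ rpos G s t P β j + 1 := by
  intro β j hL
  obtain ⟨n, hn⟩ := hL
  obtain ⟨x, hxOn, hxArc, hxpos⟩ := hn
  obtain ⟨u, w, hw, hwβ, hadj, hedges, hxu⟩ := arc_into_bridge hxArc
  have hwns : w ≠ s := hw.1
  have hwnt : w ≠ t := hw.2.1
  have hwnotint : ¬ ∃ j', Internal (P j') w := by
    rintro ⟨j', hj'⟩; exact hw.2.2 j' hj'.1
  have hvoutw : vout s t w = Sum.inr w := by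
    unfold vout; rw [if_neg]; push_neg; exact ⟨hwns, hwnt⟩
  have hcw : collapse G s t P (Sum.inr w) = Sum.inl w := by
    rw [collapse_inr, if_neg hwnotint]
  have hSplitRev : SplitArc G s t P (vout s t w) (vin u) :=
    SplitArc.offpath w u hadj.symm (fun j' hj' => hedges j' (by rwa [Sym2.eq_swap] at hj'))
  have hRes : ResArc G s t P (Sum.inl w) (Sum.inl u) :=
    ⟨_, _, hSplitRev, by rw [hvoutw, hcw], by
      rw [show vin u = Sum.inl u from rfl, collapse_inl]⟩
  have hNotDel : ¬ DeletedArc G s t P (Sum.inl w) (Sum.inl u) := by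
    rintro ⟨u', v', ⟨j', htr⟩, h1, h2⟩
    obtain ⟨hvw, -⟩ := collapse_vout_eq_inl h1.symm
    subst hvw
    exact hw.2.2 j' (traversed_mem_support_right htr)
  -- determine `u` and the needed facts from the case analysis on `OnPath`
  have key : u ∉ offPath G s t P ∧ OnPath G s t P j (Sum.inl u) ∧
      posOn G s t P j x ≤ posOn G s t P j (Sum.inl u) + 1 := by
    rcases hxOn with hx | hx | ⟨v, hv, hx | hx⟩
    · -- x = inl s
      obtain ⟨hus, -⟩ := collapse_vout_eq_inl (hxu.symm.trans hx)
      subst hus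
      refine ⟨fun h => h.1 rfl, Or.inl rfl, ?_⟩
      rw [hx]
      exact Nat.le_succ _
    · -- x = inl t
      obtain ⟨hut, -⟩ := collapse_vout_eq_inl (hxu.symm.trans hx)
      subst hut
      refine ⟨fun h => h.2.1 rfl, Or.inr (Or.inl rfl), ?_⟩
      rw [hx]
      exact Nat.le_succ _
    · -- x = inl v, v internal: impossible
      exfalso
      obtain ⟨huv, h2⟩ := collapse_vout_eq_inl (hxu.symm.trans hx)
      subst huv
      rcases h2 with h2 | h2 | h2
      · exact hv.2.1 h2
      · exact hv.2.2 h2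
      · exact h2 ⟨j, hv⟩
    · -- x = inr v, v internal
      obtain ⟨huv, -⟩ := collapse_vout_eq_inr (hxu.symm.trans hx)
      subst huv
      refine ⟨fun h => h.2.2 j hv.1, Or.inr (Or.inr ⟨_, hv, Or.inl rfl⟩), ?_⟩
      rw [hx, posOn_inr, posOn_inl, if_neg hv.2.1, if_neg hv.2.2]
  obtain ⟨hunot, hOnu, hposle⟩ := key
  have htoGRu : toGR G s t P (Sum.inl u) = Sum.inl (Sum.inl u) := toGR_inl_not_offPath hunot
  have hGR : GRArc G s t P (Sum.inr β) (Sum.inl (Sum.inl u)) :=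
    ⟨⟨Sum.inl w, Sum.inl u, ⟨hRes, hNotDel⟩, hwβ.symm, htoGRu.symm⟩, by simp⟩
  have hmem : posOn G s t P j (Sum.inl u) ∈ OutPos G s t P β j :=
    ⟨Sum.inl u, hOnu, hGR, rfl⟩
  refine ⟨⟨_, hmem⟩, ?_⟩
  have h1 : lpos G s t P β j ≤ n := Nat.sInf_le ⟨x, hxOn, hxArc, hxpos⟩
  have hbdd : BddAbove (OutPos G s t P β j) := by
    refine ⟨2 * (P j).support.length + 1, ?_⟩
    rintro m ⟨y, -, -, rfl⟩
    exact posOn_le j y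
  have h2 : posOn G s t P j (Sum.inl u) ≤ rpos G s t P β j := le_csSup hbdd hmem
  omega

end PaperTW
end

section
/- Let (β_i, β_x) and (β_{i'}, β_{x'}) be arcs of D_1, and let y be the minimal index in {1, …, r} such that l_x^y and r_i^y are defined and l_x^y is left of or equal to r_i^y (such a y exists by condition (a)). If l_{x'}^y and r_{i'}^y are defined and l_{x'}^y is left of or equal to l_x^y, and l_x^y is left of or equal to r_{i'}^y, then x = x'. -/
namespace PaperTW

variable {V : Type*} [DecidableEq V]

variable (G : SimpleGraph V) (s t : V) {r : ℕ} (P : Fin r → G.Walk s t)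

variable (ID : Bridge G s t P → ℕ)

private lemma aux_unique {V : Type*} [DecidableEq V]
    (G : SimpleGraph V) (s t : V) {r : ℕ} (P : Fin r → G.Walk s t)
    (ID : Bridge G s t P → ℕ) (hID : Function.Injective ID)
    {j : Fin r} {βi βx βi' βx' : Bridge G s t P}
    (h1 : DArc G s t P ID j βi βx) (h2 : DArc G s t P ID j βi' βx')
    (hAx' : CondA G s t P βi βx') (hAx : CondA G s t P βi' βx)
    (hle : rpos G s t P βx' j ≤ rpos G s t P βx j) : βx = βx' := by
  obtain ⟨hne1, hA1, hB1, hmax1⟩ := h1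
  obtain ⟨hne2, hA2, hB2, hmax2⟩ := h2
  have hxne : βx ≠ βi' := by
    intro h
    rcases hB2.2 with hR | hlt
    · exact hR (h ▸ hB1.1)
    · rw [h] at hle; omega
  have hBx : CondB G s t P j βi' βx := by
    refine ⟨hB1.1, ?_⟩
    rcases hB2.2 with hR | hlt
    · exact Or.inl hR
    · exact Or.inr (lt_of_lt_of_le hlt hle)
  rcases hmax2 βx hxne hAx hBx with hlt | ⟨heq, hid⟩
  · omega
  · have hx'ne : βx' ≠ βi := by
      intro h
      rcases hB1.2 with hR | hlt
      · exact hR (h ▸ hB2.1)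
      · rw [h] at heq; omega
    have hBx' : CondB G s t P j βi βx' := by
      refine ⟨hB2.1, ?_⟩
      rcases hB1.2 with hR | hlt
      · exact Or.inl hR
      · exact Or.inr (heq ▸ hlt)
    rcases hmax1 βx' hx'ne hAx' hBx' with hlt | ⟨heq2, hid2⟩
    · omega
    · exact hID (le_antisymm hid hid2)

/-- Let `(β_i, β_x)` and `(β_i', β_x')` be arcs of `D_1`, and let `y` be the
minimal index such that `l_x^y` and `r_i^y` are defined with `l_x^y ≤ r_i^y`.
If `l_{x'}^y` and `r_{i'}^y` are defined with `l_{x'}^y ≤ l_x^y` and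
`l_x^y ≤ r_{i'}^y`, then `x = x'`. -/
theorem unique_left_endpoint_in_D1
    {V : Type*} [Fintype V] [DecidableEq V]
    (G : SimpleGraph V) (s t : V) (hst : s ≠ t)
    {r : ℕ} (hr : 0 < r) (P : Fin r → G.Walk s t) (hP : PathSystem P)
    (ID : Bridge G s t P → ℕ) (hID : Function.Injective ID)
    (βi βx βi' βx' : Bridge G s t P)
    (h1 : DArc G s t P ID ⟨0, hr⟩ βi βx)
    (h2 : DArc G s t P ID ⟨0, hr⟩ βi' βx')
    (y : Fin r)
    (hy : HasL G s t P βx y ∧ HasR G s t P βi y ∧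
      lpos G s t P βx y ≤ rpos G s t P βi y)
    (hymin : ∀ y' : Fin r, y' < y →
      ¬ (HasL G s t P βx y' ∧ HasR G s t P βi y' ∧
          lpos G s t P βx y' ≤ rpos G s t P βi y'))
    (ha : HasL G s t P βx' y) (hb : HasR G s t P βi' y)
    (hc : lpos G s t P βx' y ≤ lpos G s t P βx y)
    (hd : lpos G s t P βx y ≤ rpos G s t P βi' y) :
    βx = βx' := by
  have hAx' : CondA G s t P βi βx' := ⟨y, ha, hy.2.1, le_trans hc hy.2.2⟩
  have hAx : CondA G s t P βi' βx := ⟨y, hy.1, hb, hd⟩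
  rcases le_total (rpos G s t P βx' ⟨0, hr⟩) (rpos G s t P βx ⟨0, hr⟩) with hle | hle
  · exact aux_unique G s t P ID hID h1 h2 hAx' hAx hle
  · exact (aux_unique G s t P ID hID h2 h1 hAx hAx' hle).symm

end PaperTW
end

section
/- Let G = (V, E) be a finite simple graph of treewidth at most k, and let X ⊆ V. Then there exists an (X, 2/3)-balanced separator of G of size at most k+1: that is, there exist pairwise disjoint sets A, B, S with A ∪ B ∪ S = V, |S| ≤ k+1, no edge of G joining a vertex of A to a vertex of B, |A ∩ X| ≤ (2/3)·|X|, and |B ∩ X| ≤ (2/3)·|X|. -/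
open SimpleGraph Finset

namespace BalSep

variable {ι : Type*} [DecidableEq ι] {T : SimpleGraph ι}

/-- The set of nodes having a walk to `y` avoiding `t`. -/
def Side (T : SimpleGraph ι) (t y : ι) : Set ι :=
  {z | ∃ p : T.Walk z y, t ∉ p.support}

lemma mem_side_of_walk {t y z z' : ι} (h : z ∈ Side T t y) (q : T.Walk z' z)
    (hq : t ∉ q.support) : z' ∈ Side T t y := by
  obtain ⟨p, hp⟩ := h
  refine ⟨q.append p, ?_⟩
  rw [SimpleGraph.Walk.mem_support_append_iff]
  rintro (h1 | h1)
  · exact hq h1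
  · exact hp h1

lemma not_reach_of_adj (hT : T.IsTree) {t y y' : ι} (hty : T.Adj t y) (hty' : T.Adj t y')
    (q : T.Walk y y') (hq : t ∉ q.support) : y = y' := by
  have hb : t ∉ q.bypass.support := fun h => hq (q.support_bypass_subset h)
  have hA : (SimpleGraph.Walk.cons hty q.bypass).IsPath := by
    rw [SimpleGraph.Walk.cons_isPath_iff]
    exact ⟨q.bypass_isPath, hb⟩
  have hB : (SimpleGraph.Walk.cons hty' SimpleGraph.Walk.nil).IsPath := by
    rw [SimpleGraph.Walk.cons_isPath_iff]
    constructor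
    · exact SimpleGraph.Walk.IsPath.nil
    · simp [hty'.ne]
  have hpq := hT.IsAcyclic.path_unique ⟨_, hA⟩ ⟨_, hB⟩
  have hval : SimpleGraph.Walk.cons hty q.bypass
      = SimpleGraph.Walk.cons hty' SimpleGraph.Walk.nil := congrArg Subtype.val hpq
  have hsup := congrArg SimpleGraph.Walk.support hval
  rw [SimpleGraph.Walk.support_cons, SimpleGraph.Walk.support_cons,
    SimpleGraph.Walk.support_nil] at hsup
  have hmem : y ∈ q.bypass.support := q.bypass.start_mem_support
  have hmem2 : y ∈ [t, y'] := by
    rw [List.cons_eq_cons] at hsup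
    rw [hsup.2] at hmem
    exact List.mem_cons_of_mem t hmem
  rcases List.mem_cons.mp hmem2 with h | h
  · exact absurd h hty.ne'
  · simpa using h

lemma side_exists (hT : T.IsTree) {t z : ι} (hz : z ≠ t) :
    ∃ u, T.Adj t u ∧ z ∈ Side T t u := by
  obtain ⟨p, hp, -⟩ := hT.isConnected.exists_path_of_dist z t
  obtain ⟨u, h, q, heq⟩ := SimpleGraph.Walk.exists_eq_cons_of_ne (Ne.symm hz) p.reverse
  have hrp : p.reverse.IsPath := hp.reverse
  rw [heq, SimpleGraph.Walk.cons_isPath_iff] at hrp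
  refine ⟨u, h, q.reverse, ?_⟩
  rw [SimpleGraph.Walk.support_reverse, List.mem_reverse]
  exact hrp.2

lemma side_cover (hT : T.IsTree) {t y : ι} (hty : T.Adj t y) (z : ι) :
    z ∈ Side T t y ∨ z ∈ Side T y t := by
  by_cases hzt : z = t
  · subst hzt
    right
    exact ⟨SimpleGraph.Walk.nil, by simp [hty.ne']⟩
  by_cases hzy : z = y
  · subst hzy
    left
    exact ⟨SimpleGraph.Walk.nil, by simp [hty.ne]⟩
  obtain ⟨p, hp, -⟩ := hT.isConnected.exists_path_of_dist z t
  obtain ⟨u, h, q, heq⟩ := SimpleGraph.Walk.exists_eq_cons_of_ne (Ne.symm hzt) p.reverse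
  have hrp : p.reverse.IsPath := hp.reverse
  rw [heq, SimpleGraph.Walk.cons_isPath_iff] at hrp
  by_cases huy : u = y
  · subst huy
    left
    refine ⟨q.reverse, ?_⟩
    rw [SimpleGraph.Walk.support_reverse, List.mem_reverse]
    exact hrp.2
  · right
    refine ⟨p, fun hy => ?_⟩
    have hy1 : y ∈ p.reverse.support := by
      rw [SimpleGraph.Walk.support_reverse, List.mem_reverse]
      exact hy
    rw [heq, SimpleGraph.Walk.support_cons] at hy1
    have hy2 : y ∈ q.support := by
      rcases List.mem_cons.mp hy1 with h1 | h1
      · exact absurd h1 hty.ne'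
      · exact h1
    have hq' : t ∉ (q.takeUntil y hy2).support :=
      fun hc => hrp.2 (q.support_takeUntil_subset hy2 hc)
    exact huy (not_reach_of_adj hT h hty (q.takeUntil y hy2) hq')

lemma side_disjoint (hT : T.IsTree) {t y z : ι} (hty : T.Adj t y)
    (h1 : z ∈ Side T t y) (h2 : z ∈ Side T y t) : False := by
  obtain ⟨p1, hp1⟩ := h1
  obtain ⟨p2, hp2⟩ := h2
  set w := p1.reverse.append p2 with hw
  have hedge : s(y, t) ∉ w.edges := by
    intro he
    rw [hw, SimpleGraph.Walk.edges_append] at he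
    rcases List.mem_append.mp he with h | h
    · have := p1.reverse.snd_mem_support_of_mem_edges h
      rw [SimpleGraph.Walk.support_reverse, List.mem_reverse] at this
      exact hp1 this
    · have := p2.fst_mem_support_of_mem_edges h
      exact hp2 this
  have hpq := hT.IsAcyclic.path_unique w.toPath (SimpleGraph.Path.singleton hty.symm)
  have hPe : s(y, t) ∈ (SimpleGraph.Path.singleton hty.symm : T.Path y t).1.edges := by
    simp [SimpleGraph.Path.singleton]
  rw [← hpq] at hPe
  exact hedge (w.edges_bypass_subset hPe)

lemma side_unique (hT : T.IsTree) {t y y' z : ι} (hy : T.Adj t y) (hy' : T.Adj t y')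
    (h1 : z ∈ Side T t y) (h2 : z ∈ Side T t y') : y = y' := by
  obtain ⟨p1, hp1⟩ := h1
  obtain ⟨p2, hp2⟩ := h2
  refine not_reach_of_adj hT hy hy' (p1.reverse.append p2) ?_
  rw [SimpleGraph.Walk.mem_support_append_iff]
  rintro (h | h)
  · rw [SimpleGraph.Walk.support_reverse, List.mem_reverse] at h
    exact hp1 h
  · exact hp2 h

lemma path_length (hT : T.IsTree) {z x : ι} (p : T.Walk z x) (hp : p.IsPath) :
    p.length = T.dist z x := by
  obtain ⟨q, hq, hql⟩ := hT.isConnected.exists_path_of_dist z x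
  have h1 := hT.IsAcyclic.path_unique ⟨p, hp⟩ ⟨q, hq⟩
  have h2 : p = q := congrArg Subtype.val h1
  rw [h2, hql]

lemma dist_side (hT : T.IsTree) {t y z : ι} (hty : T.Adj t y) (hz : z ∈ Side T t y) :
    T.dist z t = T.dist z y + 1 := by
  obtain ⟨p, hp⟩ := hz
  have hb : t ∉ p.bypass.support := fun h => hp (p.support_bypass_subset h)
  have hcons : (SimpleGraph.Walk.cons hty p.bypass.reverse).IsPath := by
    rw [SimpleGraph.Walk.cons_isPath_iff]
    refine ⟨p.bypass_isPath.reverse, ?_⟩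
    rw [SimpleGraph.Walk.support_reverse, List.mem_reverse]
    exact hb
  have l1 := path_length hT (SimpleGraph.Walk.cons hty p.bypass.reverse).reverse hcons.reverse
  have l2 := path_length hT p.bypass p.bypass_isPath
  rw [SimpleGraph.Walk.length_reverse, SimpleGraph.Walk.length_cons,
    SimpleGraph.Walk.length_reverse] at l1
  omega

lemma split_lemma {α : Type*} [DecidableEq α] (s : Finset α) (w : α → ℕ) (n : ℕ)
    (h1 : ∀ i ∈ s, 2 * w i ≤ n) (h2 : ∑ i ∈ s, w i ≤ n) :
    ∃ a ⊆ s, 3 * (∑ i ∈ a, w i) ≤ 2 * n ∧ 3 * (∑ i ∈ s \ a, w i) ≤ 2 * n := by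
  by_cases hbig : ∃ i ∈ s, n ≤ 3 * w i
  · obtain ⟨i, his, hi⟩ := hbig
    have hsub : {i} ⊆ s := Finset.singleton_subset_iff.mpr his
    refine ⟨{i}, hsub, ?_, ?_⟩
    · rw [Finset.sum_singleton]
      have := h1 i his
      omega
    · have hsd : ∑ j ∈ s \ {i}, w j + ∑ j ∈ {i}, w j = ∑ j ∈ s, w j :=
        Finset.sum_sdiff hsub
      rw [Finset.sum_singleton] at hsd
      omega
  · push_neg at hbig
    obtain ⟨a, ha, hmax⟩ := Finset.exists_max_image
      ((s.powerset).filter (fun a => 3 * (∑ i ∈ a, w i) ≤ 2 * n)) Finset.card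
      ⟨∅, by simp⟩
    rw [Finset.mem_filter, Finset.mem_powerset] at ha
    refine ⟨a, ha.1, ha.2, ?_⟩
    by_contra hcon
    push_neg at hcon
    have hne : (s \ a).Nonempty := by
      rcases Finset.eq_empty_or_nonempty (s \ a) with h | h
      · rw [h, Finset.sum_empty] at hcon; omega
      · exact h
    obtain ⟨i, hi⟩ := hne
    have his : i ∈ s := (Finset.mem_sdiff.mp hi).1
    have hia : i ∉ a := (Finset.mem_sdiff.mp hi).2
    have hsd : ∑ j ∈ s \ a, w j + ∑ j ∈ a, w j = ∑ j ∈ s, w j := Finset.sum_sdiff ha.1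
    have hwi := hbig i his
    have hins : 3 * (∑ j ∈ insert i a, w j) ≤ 2 * n := by
      rw [Finset.sum_insert hia]
      omega
    have hcard : (insert i a).card ≤ a.card := hmax (insert i a) (by
      rw [Finset.mem_filter, Finset.mem_powerset]
      exact ⟨Finset.insert_subset his ha.1, hins⟩)
    rw [Finset.card_insert_of_notMem hia] at hcard
    omega

end BalSep

/-- `(T, bags)` is a tree decomposition of the graph `G`: `T` is a tree, every
vertex of `G` lies in some bag, the bags containing any fixed vertex induce a
connected subtree of `T`, and every edge of `G` is contained in some bag. -/
def IsTreeDecomp {V : Type*} {ι : Type*} (G : SimpleGraph V) (T : SimpleGraph ι)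
    (bags : ι → Finset V) : Prop :=
  T.IsTree ∧
  (∀ v : V, ∃ x, v ∈ bags x) ∧
  (∀ v : V, (T.induce {x | v ∈ bags x}).Connected) ∧
  (∀ u v : V, G.Adj u v → ∃ x, u ∈ bags x ∧ v ∈ bags x)

open BalSep in
/-- If the finite simple graph `G` has treewidth at most `k` (i.e., admits a tree
decomposition with every bag of size at most `k + 1`), then for every `X ⊆ V`
there is an `(X, 2/3)`-balanced separator of size at most `k + 1`: pairwise
disjoint sets `A`, `B`, `S` covering `V`, with `|S| ≤ k + 1`, no edge of `G`
joining `A` to `B`, and `|A ∩ X| ≤ (2/3)·|X|`, `|B ∩ X| ≤ (2/3)·|X|`. -/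
theorem balanced_separator_of_treewidth {V : Type*} [Fintype V] [DecidableEq V]
    (G : SimpleGraph V) (k : ℕ)
    (htw : ∃ (ι : Type) (_ : Fintype ι) (T : SimpleGraph ι) (bags : ι → Finset V),
        IsTreeDecomp G T bags ∧ ∀ x, (bags x).card ≤ k + 1)
    (X : Finset V) :
    ∃ A B S : Finset V,
      Disjoint A B ∧ Disjoint A S ∧ Disjoint B S ∧
      A ∪ B ∪ S = Finset.univ ∧
      S.card ≤ k + 1 ∧
      (∀ a ∈ A, ∀ b ∈ B, ¬ G.Adj a b) ∧
      3 * (A ∩ X).card ≤ 2 * X.card ∧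
      3 * (B ∩ X).card ≤ 2 * X.card := by
  classical
  obtain ⟨ι, _inst, T, bags, ⟨htree, hcover, hconn, hedge⟩, hsize⟩ := htw
  haveI : Nonempty ι := htree.isConnected.nonempty
  set n := X.card with hn
  set node : V → ι := fun v => (hcover v).choose with hnodedef
  have hnodemem : ∀ v, v ∈ bags (node v) := fun v => (hcover v).choose_spec
  -- walks between bags of a vertex avoiding a node not containing it
  have hwalk : ∀ t : ι, ∀ v : V, v ∉ bags t → ∀ x x' : ι, v ∈ bags x → v ∈ bags x' →
      ∃ p : T.Walk x x', t ∉ p.support := by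
    intro t v hv x x' hx hx'
    obtain ⟨w⟩ := (hconn v).preconnected ⟨x, hx⟩ ⟨x', hx'⟩
    refine ⟨w.map (SimpleGraph.Embedding.induce {i | v ∈ bags i}).toHom, ?_⟩
    intro hm
    change t ∈ (w.map (SimpleGraph.Embedding.induce {i | v ∈ bags i}).toHom).support at hm
    rw [SimpleGraph.Walk.support_map] at hm
    obtain ⟨⟨z, hz⟩, hz1, hz2⟩ := List.mem_map.mp hm
    have hzt : z = t := hz2
    rw [hzt] at hz
    exact hv hz
  have hprop : ∀ t y : ι, ∀ v : V, v ∉ bags t → ∀ x, v ∈ bags x → x ∈ Side T t y →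
      ∀ x', v ∈ bags x' → x' ∈ Side T t y := by
    intro t y v hv x hx hside x' hx'
    obtain ⟨p, hp⟩ := hwalk t v hv x' x hx' hx
    exact mem_side_of_walk hside p hp
  -- the centroid
  obtain ⟨t, -, ht⟩ := Finset.exists_min_image Finset.univ
      (fun t => ∑ v ∈ X, T.dist t (node v)) Finset.univ_nonempty
  have key : ∀ y : ι, T.Adj t y →
      2 * (X.filter (fun v => node v ∈ Side T t y)).card ≤ n := by
    intro y hty
    have hsplit := Finset.card_filter_add_card_filter_not
      (s := X) (p := fun v => node v ∈ Side T t y)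
    have h1 : ∀ v ∈ X.filter (fun v => node v ∈ Side T t y),
        T.dist t (node v) = T.dist y (node v) + 1 := by
      intro v hv
      rw [Finset.mem_filter] at hv
      rw [SimpleGraph.dist_comm, dist_side htree hty hv.2, SimpleGraph.dist_comm]
    have h2 : ∀ v ∈ X.filter (fun v => ¬ node v ∈ Side T t y),
        T.dist y (node v) = T.dist t (node v) + 1 := by
      intro v hv
      rw [Finset.mem_filter] at hv
      have hmem : node v ∈ Side T y t := (side_cover htree hty (node v)).resolve_left hv.2
      rw [SimpleGraph.dist_comm, dist_side htree hty.symm hmem, SimpleGraph.dist_comm]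
    have e1 : ∑ v ∈ X, T.dist t (node v)
        = ((∑ v ∈ X.filter (fun v => node v ∈ Side T t y), T.dist y (node v))
          + (X.filter (fun v => node v ∈ Side T t y)).card)
          + ∑ v ∈ X.filter (fun v => ¬ node v ∈ Side T t y), T.dist t (node v) := by
      rw [← Finset.sum_filter_add_sum_filter_not X (fun v => node v ∈ Side T t y)
        (fun v => T.dist t (node v))]
      rw [Finset.sum_congr rfl h1, Finset.sum_add_distrib, Finset.sum_const, smul_eq_mul,
        mul_one]
    have e2 : ∑ v ∈ X, T.dist y (node v)
        = (∑ v ∈ X.filter (fun v => node v ∈ Side T t y), T.dist y (node v))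
          + ((∑ v ∈ X.filter (fun v => ¬ node v ∈ Side T t y), T.dist t (node v))
          + (X.filter (fun v => ¬ node v ∈ Side T t y)).card) := by
      rw [← Finset.sum_filter_add_sum_filter_not X (fun v => node v ∈ Side T t y)
        (fun v => T.dist y (node v))]
      rw [Finset.sum_congr rfl h2, Finset.sum_add_distrib, Finset.sum_const, smul_eq_mul,
        mul_one]
    have hle := ht y (Finset.mem_univ y)
    rw [e1, e2] at hle
    omega
  -- the pieces
  set nbrs := Finset.univ.filter (fun y => T.Adj t y) with hnbrs
  set piece : ι → Finset V :=
    fun y => X.filter (fun v => v ∉ bags t ∧ ∀ x, v ∈ bags x → x ∈ Side T t y) with hpiece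
  have hw2 : ∀ y ∈ nbrs, 2 * (piece y).card ≤ n := by
    intro y hy
    rw [hnbrs, Finset.mem_filter] at hy
    refine le_trans (Nat.mul_le_mul_left 2 (Finset.card_le_card ?_)) (key y hy.2)
    intro v hv
    rw [hpiece, Finset.mem_filter] at hv
    rw [Finset.mem_filter]
    exact ⟨hv.1, hv.2.2 (node v) (hnodemem v)⟩
  have hdisj : ∀ y ∈ nbrs, ∀ y' ∈ nbrs, y ≠ y' → Disjoint (piece y) (piece y') := by
    intro y hy y' hy' hne
    rw [hnbrs, Finset.mem_filter] at hy hy'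
    rw [Finset.disjoint_left]
    intro v hv hv'
    rw [hpiece, Finset.mem_filter] at hv hv'
    exact hne (side_unique htree hy.2 hy'.2 (hv.2.2 _ (hnodemem v)) (hv'.2.2 _ (hnodemem v)))
  have htot : ∑ y ∈ nbrs, (piece y).card ≤ n := by
    rw [← Finset.card_biUnion hdisj]
    refine Finset.card_le_card ?_
    intro v hv
    obtain ⟨y, -, hy⟩ := Finset.mem_biUnion.mp hv
    rw [hpiece, Finset.mem_filter] at hy
    exact hy.1
  obtain ⟨As, hAs, hA1, hA2⟩ := split_lemma nbrs (fun y => (piece y).card) n hw2 htot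
  -- the separation
  set A := Finset.univ.filter
    (fun v : V => v ∉ bags t ∧ ∃ y ∈ As, ∀ x, v ∈ bags x → x ∈ Side T t y) with hA
  set B := Finset.univ.filter
    (fun v : V => v ∉ bags t ∧ ¬ ∃ y ∈ As, ∀ x, v ∈ bags x → x ∈ Side T t y) with hB
  have hmemB2 : ∀ v ∈ B, ∃ y ∈ nbrs \ As, ∀ x, v ∈ bags x → x ∈ Side T t y := by
    intro v hv
    rw [hB, Finset.mem_filter] at hv
    have hnt : node v ≠ t := fun h => hv.2.1 (h ▸ hnodemem v)
    obtain ⟨u, htu, hu⟩ := side_exists htree hnt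
    have hall : ∀ x', v ∈ bags x' → x' ∈ Side T t u :=
      hprop t u v hv.2.1 (node v) (hnodemem v) hu
    have hunb : u ∈ nbrs := by
      rw [hnbrs, Finset.mem_filter]; exact ⟨Finset.mem_univ u, htu⟩
    have huA : u ∉ As := fun hc => hv.2.2 ⟨u, hc, hall⟩
    exact ⟨u, Finset.mem_sdiff.mpr ⟨hunb, huA⟩, hall⟩
  refine ⟨A, B, bags t, ?_, ?_, ?_, ?_, hsize t, ?_, ?_, ?_⟩
  · rw [Finset.disjoint_left]
    intro v hvA hvB
    rw [hA, Finset.mem_filter] at hvA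
    rw [hB, Finset.mem_filter] at hvB
    exact hvB.2.2 hvA.2.2
  · rw [Finset.disjoint_left]
    intro v hvA hvS
    rw [hA, Finset.mem_filter] at hvA
    exact hvA.2.1 hvS
  · rw [Finset.disjoint_left]
    intro v hvB hvS
    rw [hB, Finset.mem_filter] at hvB
    exact hvB.2.1 hvS
  · ext v
    simp only [Finset.mem_union, Finset.mem_univ, iff_true]
    by_cases hvt : v ∈ bags t
    · right; exact hvt
    · by_cases hex : ∃ y ∈ As, ∀ x, v ∈ bags x → x ∈ Side T t y
      · left; left
        rw [hA, Finset.mem_filter]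
        exact ⟨Finset.mem_univ v, hvt, hex⟩
      · left; right
        rw [hB, Finset.mem_filter]
        exact ⟨Finset.mem_univ v, hvt, hex⟩
  · intro a ha b hb hadj
    rw [hA, Finset.mem_filter] at ha
    rw [hB, Finset.mem_filter] at hb
    obtain ⟨y, hyAs, hay⟩ := ha.2.2
    obtain ⟨x, hxa, hxb⟩ := hedge a b hadj
    exact hb.2.2 ⟨y, hyAs, hprop t y b hb.2.1 x hxb (hay x hxa)⟩
  · have hsub : A ∩ X ⊆ As.biUnion piece := by
      intro v hv
      rw [Finset.mem_inter] at hv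
      obtain ⟨hvA, hvX⟩ := hv
      rw [hA, Finset.mem_filter] at hvA
      obtain ⟨y, hyAs, hside⟩ := hvA.2.2
      refine Finset.mem_biUnion.mpr ⟨y, hyAs, ?_⟩
      rw [hpiece, Finset.mem_filter]
      exact ⟨hvX, hvA.2.1, hside⟩
    calc 3 * (A ∩ X).card ≤ 3 * ∑ y ∈ As, (piece y).card := by
          refine Nat.mul_le_mul_left 3 (le_trans (Finset.card_le_card hsub) ?_)
          exact Finset.card_biUnion_le
      _ ≤ 2 * n := hA1
  · have hsub : B ∩ X ⊆ (nbrs \ As).biUnion piece := by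
      intro v hv
      rw [Finset.mem_inter] at hv
      obtain ⟨hvB, hvX⟩ := hv
      obtain ⟨y, hymem, hside⟩ := hmemB2 v hvB
      refine Finset.mem_biUnion.mpr ⟨y, hymem, ?_⟩
      rw [hpiece, Finset.mem_filter]
      rw [hB, Finset.mem_filter] at hvB
      exact ⟨hvX, hvB.2.1, hside⟩
    calc 3 * (B ∩ X).card ≤ 3 * ∑ y ∈ nbrs \ As, (piece y).card := by
          refine Nat.mul_le_mul_left 3 (le_trans (Finset.card_le_card hsub) ?_)
          exact Finset.card_biUnion_le
      _ ≤ 2 * n := hA2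
end
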